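/- The sequence t_n = binomial(n,3) * (3n-9)!/(2n-4)! satisfies the asymptotic estimate t_n ~ (4*sqrt(3)/(3^10 * sqrt(pi))) * n^{-5/2} * (27/4)^n * n! as n tends to infinity. -/

import Mathlib

open Filter Asymptotics Real Topology

lemma aux_s_pos {n : ℕ} (hn : 1 ≤ n) : 0 < Stirling.stirlingSeq n := by
  obtain ⟨m, rfl⟩ : ∃ m, n = m + 1 := ⟨n - 1, by omega⟩
  exact Stirling.stirlingSeq'_pos m

lemma aux_fact_eq {n : ℕ} (hn : 1 ≤ n) :
    (Nat.factorial n : ℝ) =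
      Stirling.stirlingSeq n * (Real.sqrt (2 * n) * ((n : ℝ) / Real.exp 1) ^ n) := by
  have h1 : (0:ℝ) < n := by exact_mod_cast hn
  have h2 : (0:ℝ) < Real.sqrt (2 * n) * ((n : ℝ) / Real.exp 1) ^ n := by positivity
  rw [Stirling.stirlingSeq]
  field_simp

lemma aux_choose3 (q : ℕ) : ((q + 4).choose 3 : ℝ) * 6 = (q + 4) * (q + 3) * (q + 2) := by
  have h : 6 * (q + 4).choose 3 = (q + 4) * (q + 3) * (q + 2) := by
    have := Nat.descFactorial_eq_factorial_mul_choose (q + 4) 3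
    simp [Nat.descFactorial_succ, Nat.factorial] at this
    rw [← this]; ring
  have := congrArg (Nat.cast (R := ℝ)) h
  push_cast at this
  linarith


lemma aux_div_zero (a : ℝ) : Tendsto (fun n : ℕ => a / (n:ℝ)) atTop (𝓝 0) := by
  simpa [div_eq_mul_inv] using tendsto_one_div_atTop_nhds_zero_nat.const_mul a

lemma aux_one_sub (a : ℝ) : Tendsto (fun n : ℕ => 1 - a / (n:ℝ)) atTop (𝓝 1) := by
  simpa using tendsto_const_nhds.sub (aux_div_zero a)

lemma aux_pow_lim (a : ℝ) :
    Tendsto (fun n : ℕ => (1 - a / (n:ℝ)) ^ n) atTop (𝓝 (Real.exp (-a))) := by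
  simpa [sub_eq_add_neg, neg_div] using Real.tendsto_one_add_div_pow_exp (-a)

lemma aux_sub_atTop (a b : ℕ) (ha : 1 ≤ a) : Tendsto (fun n : ℕ => a * n - b) atTop atTop := by
  apply tendsto_atTop_atTop.mpr
  intro m
  refine ⟨m + b, fun x hx => ?_⟩
  have h2 : x ≤ a * x := Nat.le_mul_of_pos_left x (by omega)
  omega

lemma aux_stirling (a b : ℕ) (ha : 1 ≤ a) :
    Tendsto (fun n : ℕ => Stirling.stirlingSeq (a * n - b)) atTop (𝓝 (Real.sqrt π)) :=
  Stirling.tendsto_stirlingSeq_sqrt_pi.comp (aux_sub_atTop a b ha)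

lemma aux_q1 : Tendsto (fun n : ℕ => (n:ℝ) * ((n:ℝ) - 1) * ((n:ℝ) - 2) / (6 * (n:ℝ)^3))
    atTop (𝓝 (1/6)) := by
  have h : Tendsto (fun n : ℕ => (1 - 1/(n:ℝ)) * (1 - 2/(n:ℝ)) / 6) atTop (𝓝 (1 * 1 / 6)) :=
    ((aux_one_sub 1).mul (aux_one_sub 2)).div_const 6
  rw [show (1:ℝ) * 1 / 6 = 1/6 by norm_num] at h
  refine h.congr' ?_
  filter_upwards [eventually_ge_atTop 1] with n hn
  have h0 : (0:ℝ) < (n:ℝ) := by exact_mod_cast hn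
  field_simp

lemma aux_q2 : Tendsto (fun n : ℕ => Real.sqrt ((6*(n:ℝ) - 18) / (8*(n:ℝ) - 16)))
    atTop (𝓝 (Real.sqrt 3 / 2)) := by
  have h : Tendsto (fun n : ℕ => (6 - 18/(n:ℝ)) / (8 - 16/(n:ℝ))) atTop (𝓝 ((6 - 0) / (8 - 0))) :=
    (tendsto_const_nhds.sub (aux_div_zero 18)).div
      (tendsto_const_nhds.sub (aux_div_zero 16)) (by norm_num)
  have h' : Tendsto (fun n : ℕ => (6*(n:ℝ) - 18) / (8*(n:ℝ) - 16)) atTop (𝓝 (3/4)) := by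
    rw [show ((6:ℝ) - 0) / (8 - 0) = 3/4 by norm_num] at h
    refine h.congr' ?_
    filter_upwards [eventually_ge_atTop 3] with n hn
    have h0 : (0:ℝ) < (n:ℝ) := by exact_mod_cast (by omega : 0 < n)
    have h8 : (8:ℝ)*(n:ℝ) - 16 ≠ 0 := by
      have : (3:ℝ) ≤ (n:ℝ) := by exact_mod_cast hn
      nlinarith
    field_simp
  have := (Real.continuous_sqrt.tendsto (3/4)).comp h'
  rw [show Real.sqrt (3/4) = Real.sqrt 3 / 2 by
    rw [show (3:ℝ)/4 = (Real.sqrt 3 / 2)^2 by rw [div_pow, Real.sq_sqrt (by norm_num : (0:ℝ) ≤ 3)]; norm_num,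
      Real.sqrt_sq (by positivity)]] at this
  exact this

lemma aux_T_tendsto :
    Tendsto (fun n : ℕ =>
      (Stirling.stirlingSeq (3*n-9) / (Stirling.stirlingSeq (2*n-4) * Stirling.stirlingSeq n)) *
      ( ((n:ℝ)*((n:ℝ)-1)*((n:ℝ)-2)/(6*(n:ℝ)^3)) *
        Real.sqrt ((6*(n:ℝ)-18)/(8*(n:ℝ)-16)) *
        (((1 - 3/(n:ℝ))^n)^3 / (1 - 3/(n:ℝ))^9) *
        ((1 - 2/(n:ℝ))^4 / ((1 - 2/(n:ℝ))^n)^2) *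
        (16 / 3^9 * Real.exp 1 ^ 5) ) /
      (4 * Real.sqrt 3 / (3^10 * Real.sqrt π))) atTop (𝓝 1) := by
  have hπ : (0:ℝ) < Real.sqrt π := Real.sqrt_pos.mpr Real.pi_pos
  have hs3 : (0:ℝ) < Real.sqrt 3 := by positivity
  have hS : Tendsto (fun n : ℕ => Stirling.stirlingSeq (3*n-9) /
      (Stirling.stirlingSeq (2*n-4) * Stirling.stirlingSeq n)) atTop
      (𝓝 ((Real.sqrt π)⁻¹)) := by
    have h := (aux_stirling 3 9 (by norm_num)).div
      ((aux_stirling 2 4 (by norm_num)).mul Stirling.tendsto_stirlingSeq_sqrt_pi)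
      (by positivity)
    rw [show Real.sqrt π / (Real.sqrt π * Real.sqrt π) = (Real.sqrt π)⁻¹ by
      field_simp] at h
    exact h
  have hC : Tendsto (fun n : ℕ => ((1 - 3/(n:ℝ))^n)^3 / (1 - 3/(n:ℝ))^9) atTop
      (𝓝 (Real.exp (-9))) := by
    have h := ((aux_pow_lim 3).pow 3).div ((aux_one_sub 3).pow 9) (by norm_num)
    rw [show Real.exp (-3) ^ 3 / (1:ℝ)^9 = Real.exp (-9) by
      rw [← Real.exp_nat_mul]; norm_num] at h
    exact h
  have hD : Tendsto (fun n : ℕ => (1 - 2/(n:ℝ))^4 / ((1 - 2/(n:ℝ))^n)^2) atTop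
      (𝓝 (Real.exp 4)) := by
    have h := ((aux_one_sub 2).pow 4).div ((aux_pow_lim 2).pow 2)
      (by positivity)
    rw [show (1:ℝ)^4 / Real.exp (-2) ^ 2 = Real.exp 4 by
      rw [← Real.exp_nat_mul]; norm_num [Real.exp_neg]] at h
    exact h
  have h := (hS.mul (((((aux_q1).mul aux_q2).mul hC).mul hD).mul
    (tendsto_const_nhds (x := (16 / 3^9 * Real.exp 1 ^ 5 : ℝ))))).div_const
    (4 * Real.sqrt 3 / (3^10 * Real.sqrt π))
  have hval : (Real.sqrt π)⁻¹ * (1/6 * (Real.sqrt 3/2) * Real.exp (-9) * Real.exp 4 *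
      (16/3^9 * Real.exp 1 ^ 5)) / (4 * Real.sqrt 3 / (3^10 * Real.sqrt π)) = 1 := by
    have h5 : Real.exp 1 ^ (5:ℕ) = Real.exp 5 := by rw [← Real.exp_nat_mul]; norm_num
    rw [h5, div_eq_one_iff_eq (by positivity)]
    rw [show (1:ℝ)/6*(Real.sqrt 3/2)*Real.exp (-9)*Real.exp 4*(16/3^9*Real.exp 5)
        = Real.sqrt 3 * (Real.exp (-9) * Real.exp 4 * Real.exp 5) * (4/3^10) by ring,
      ← Real.exp_add, ← Real.exp_add]
    norm_num
    field_simp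
  rw [hval] at h
  exact h

set_option maxHeartbeats 4000000 in
/-- The sequence `t_n = C(n,3) * (3n-9)!/(2n-4)!` of numbers of 3-connected labelled chordal
planar graphs satisfies `t_n ~ (4√3/(3^10 √π)) * n^(-5/2) * (27/4)^n * n!` as `n → ∞`. -/
theorem chordal_triangulation_asymptotics :
    (fun n : ℕ => (Nat.choose n 3 : ℝ) * (Nat.factorial (3 * n - 9) : ℝ) /
        (Nat.factorial (2 * n - 4) : ℝ)) ~[atTop]
    (fun n : ℕ => (4 * Real.sqrt 3 / (3 ^ 10 * Real.sqrt Real.pi)) *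
        (n : ℝ) ^ (-(5 : ℝ) / 2) * (27 / 4 : ℝ) ^ n * (Nat.factorial n : ℝ)) := by
  have hπ : (0:ℝ) < Real.sqrt π := Real.sqrt_pos.mpr Real.pi_pos
  have hs3 : (0:ℝ) < Real.sqrt 3 := by positivity
  rw [isEquivalent_iff_tendsto_one]
  · refine aux_T_tendsto.congr' ?_
    filter_upwards [eventually_ge_atTop 4] with n hn
    obtain ⟨q, rfl⟩ : ∃ q, n = q + 4 := ⟨n - 4, by omega⟩
    simp only [Pi.div_apply]
    rw [show 3 * (q+4) - 9 = 3*q+3 by omega, show 2*(q+4)-4 = 2*q+4 by omega]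
    rw [aux_fact_eq (n := 3*q+3) (by omega), aux_fact_eq (n := 2*q+4) (by omega),
      aux_fact_eq (n := q+4) (by omega)]
    have hch : (((q+4)).choose 3 : ℝ) = (((q:ℝ)+4)*((q:ℝ)+3)*((q:ℝ)+2))/6 := by
      have := aux_choose3 q
      push_cast at this ⊢
      linarith
    rw [hch]
    push_cast
    set y : ℝ := (q : ℝ) with hy
    have hy0 : 0 ≤ y := Nat.cast_nonneg q
    have hSa := aux_s_pos (n := 3*q+3) (by omega)
    have hSb := aux_s_pos (n := 2*q+4) (by omega)
    have hSn := aux_s_pos (n := q+4) (by omega)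
    have he : (0:ℝ) < Real.exp 1 := Real.exp_pos 1
    -- rewrite u, v
    have h40 : y + 4 ≠ 0 := by positivity
    have hu : (1:ℝ) - 3/(y+4) = (y+1)/(y+4) := by
      field_simp; ring
    have hv : (1:ℝ) - 2/(y+4) = (y+2)/(y+4) := by
      field_simp; ring
    rw [hu, hv]
    -- decompose the sqrts
    have hq2 : Real.sqrt ((6*(y+4)-18)/(8*(y+4)-16)) =
        Real.sqrt 2 * Real.sqrt 3 * Real.sqrt (y+1) / (2 * Real.sqrt 2 * Real.sqrt (y+2)) := by
      rw [show (6*(y+4)-18)/(8*(y+4)-16) = (6*(y+1))/(8*(y+2)) by ring,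
        Real.sqrt_div (by positivity) _,
        Real.sqrt_mul (by norm_num : (0:ℝ) ≤ 6), Real.sqrt_mul (by norm_num : (0:ℝ) ≤ 8),
        show (6:ℝ) = 2*3 by norm_num, show (8:ℝ) = 2^2*2 by norm_num,
        Real.sqrt_mul (by norm_num : (0:ℝ) ≤ 2) 3, Real.sqrt_mul (by positivity) 2,
        Real.sqrt_sq (by norm_num : (0:ℝ) ≤ 2)]
    have hKa : Real.sqrt (2*(3*y+3)) = Real.sqrt 2 * Real.sqrt 3 * Real.sqrt (y+1) := by
      rw [show 2*(3*y+3) = 2*(3*(y+1)) by ring, Real.sqrt_mul (by norm_num : (0:ℝ) ≤ 2),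
        Real.sqrt_mul (by norm_num : (0:ℝ) ≤ 3)]
      ring
    have hKb : Real.sqrt (2*(2*y+4)) = 2 * Real.sqrt (y+2) := by
      rw [show 2*(2*y+4) = 2^2*(y+2) by ring, Real.sqrt_mul (by positivity),
        Real.sqrt_sq (by norm_num : (0:ℝ) ≤ 2)]
    have hKn : Real.sqrt (2*(y+4)) = Real.sqrt 2 * Real.sqrt (y+4) := by
      rw [Real.sqrt_mul (by norm_num : (0:ℝ) ≤ 2)]
    have hrp : (y+4) ^ (-(5:ℝ)/2) = ((y+4)^(2:ℕ) * Real.sqrt (y+4))⁻¹ := by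
      have h4 : (0:ℝ) < y + 4 := by linarith
      rw [← Real.rpow_natCast (y+4) 2, Real.sqrt_eq_rpow, ← Real.rpow_add h4,
        ← Real.rpow_neg h4.le]
      norm_num
    have hba : (3*y+3)/Real.exp 1 = 3*(y+1)/Real.exp 1 := by ring
    have hbb : (2*y+4)/Real.exp 1 = 2*(y+2)/Real.exp 1 := by ring
    rw [hq2, hKa, hKb, hKn, hrp, hba, hbb]
    have h2 : (0:ℝ) < Real.sqrt 2 := by positivity
    have h1y : (0:ℝ) < Real.sqrt (y+1) := Real.sqrt_pos.mpr (by linarith)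
    have h2y : (0:ℝ) < Real.sqrt (y+2) := Real.sqrt_pos.mpr (by linarith)
    have h4y : (0:ℝ) < Real.sqrt (y+4) := Real.sqrt_pos.mpr (by linarith)
    have hne1 : Stirling.stirlingSeq (3*q+3) ≠ 0 := hSa.ne'
    have hne2 : Stirling.stirlingSeq (2*q+4) ≠ 0 := hSb.ne'
    have hne3 : Stirling.stirlingSeq (q+4) ≠ 0 := hSn.ne'
    have hne4 : Real.sqrt 2 ≠ 0 := h2.ne'
    have hne5 : Real.sqrt 3 ≠ 0 := hs3.ne'
    have hne6 : Real.sqrt π ≠ 0 := hπ.ne'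
    have hne7 : Real.sqrt (y+1) ≠ 0 := h1y.ne'
    have hne8 : Real.sqrt (y+2) ≠ 0 := h2y.ne'
    have hne9 : Real.sqrt (y+4) ≠ 0 := h4y.ne'
    have hne10 : Real.exp 1 ≠ 0 := he.ne'
    simp only [mul_pow, div_pow]
    rw [show ((27:ℝ))^(q+4) = 3^(3*(q+4)) by rw [show (27:ℝ) = 3^3 by norm_num, ← pow_mul],
      show ((4:ℝ))^(q+4) = 2^(2*(q+4)) by rw [show (4:ℝ) = 2^2 by norm_num, ← pow_mul]]
    clear hne10 he hba hbb hu hv hq2 hKa hKb hKn hrp hch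
    generalize hE : Real.exp 1 = E
    have hE0 : E ≠ 0 := hE ▸ Real.exp_ne_zero 1
    field_simp
    ring
  · filter_upwards [eventually_ge_atTop 1] with n hn
    have h0 : (0:ℝ) < (n:ℝ) := by exact_mod_cast hn
    have : (0:ℝ) < (4 * Real.sqrt 3 / (3 ^ 10 * Real.sqrt Real.pi)) *
        (n : ℝ) ^ (-(5 : ℝ) / 2) * (27 / 4 : ℝ) ^ n * (Nat.factorial n : ℝ) := by
      have h1 : (0:ℝ) < (n : ℝ) ^ (-(5 : ℝ) / 2) := Real.rpow_pos_of_pos h0 _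
      have h2 : (0:ℝ) < (Nat.factorial n : ℝ) := by exact_mod_cast n.factorial_pos
      positivity
    exact this.ne'
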